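/- Call a CJ operator ρ_{B|A} of a channel from H_A to H_B a reduced unitary if there exist a finite-dimensional Hilbert space H_F and a unitary U : H_A → H_B ⊗ H_F such that ρ_{B|A} equals the partial trace over H_F of the CJ operator of the channel ρ ↦ UρU†. If ρ_{B|A} and ρ_{C|A} are reduced unitaries (CJ operators of channels from H_A to H_B and from H_A to H_C, respectively) which, padded with identities so that both act on H_B ⊗ H_C ⊗ H_A, commute, then the product ρ_{B|A}·ρ_{C|A} is a reduced unitary: there exist a finite-dimensional H_G and a unitary W : H_A → H_B ⊗ H_C ⊗ H_G such that ρ_{B|A}·ρ_{C|A} equals the partial trace over H_G of the CJ operator of the channel ρ ↦ WρW†. -/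

import Mathlib

open scoped Classical ComplexOrder
open BigOperators Matrix

noncomputable section

/-- The CJ operator `ρ : Matrix (B × A) (B × A) ℂ` of a channel from `H_A` to `H_B`
is a *reduced unitary* if it is the partial trace over an ancillary output `H_F` of
the CJ operator of a unitary channel `ρ ↦ U ρ U†`, `U : H_A → H_B ⊗ H_F`. -/
def IsReducedUnitary (dA dB : ℕ) (ρ : Matrix (Fin dB × Fin dA) (Fin dB × Fin dA) ℂ) :
    Prop :=
  ∃ (dF : ℕ) (U : Matrix (Fin dB × Fin dF) (Fin dA) ℂ),
    (∀ u v, ∑ a, U u a * star (U v a) = if u = v then 1 else 0) ∧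
    (∀ a a', ∑ u, star (U u a) * U u a' = if a = a' then 1 else 0) ∧
    (∀ (b b' : Fin dB) (a a' : Fin dA),
      ρ (b, a) (b', a') = ∑ x : Fin dF, U (b, x) a * star (U (b', x) a'))

/-- **Products of commuting reduced unitaries are reduced unitaries.**
If `ρB = ρ_{B|A}` and `ρC = ρ_{C|A}` are reduced unitaries whose paddings to
`H_B ⊗ H_C ⊗ H_A` commute, then their product is a reduced unitary, i.e. arises by
tracing out an ancilla from the CJ operator of a unitary channel
`W : H_A → H_B ⊗ H_C ⊗ H_G`. -/
theorem product_of_commuting_reduced_unitaries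
    (dA dB dC : ℕ)
    (ρB : Matrix (Fin dB × Fin dA) (Fin dB × Fin dA) ℂ)
    (ρC : Matrix (Fin dC × Fin dA) (Fin dC × Fin dA) ℂ)
    (hBpsd : ρB.PosSemidef)
    (hBtr : ∀ a a', ∑ b, ρB (b, a) (b, a') = if a = a' then 1 else 0)
    (hCpsd : ρC.PosSemidef)
    (hCtr : ∀ a a', ∑ c, ρC (c, a) (c, a') = if a = a' then 1 else 0)
    (hB : IsReducedUnitary dA dB ρB)
    (hC : IsReducedUnitary dA dC ρC)
    (hcomm : Commute
      (Matrix.of fun p q : Fin dB × Fin dC × Fin dA =>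
        ρB (p.1, p.2.2) (q.1, q.2.2) * (if p.2.1 = q.2.1 then (1 : ℂ) else 0))
      (Matrix.of fun p q : Fin dB × Fin dC × Fin dA =>
        ρC (p.2.1, p.2.2) (q.2.1, q.2.2) * (if p.1 = q.1 then (1 : ℂ) else 0))) :
    ∃ (dG : ℕ) (W : Matrix ((Fin dB × Fin dC) × Fin dG) (Fin dA) ℂ),
      (∀ u v, ∑ a, W u a * star (W v a) = if u = v then 1 else 0) ∧
      (∀ a a', ∑ u, star (W u a) * W u a' = if a = a' then 1 else 0) ∧
      (∀ p q : Fin dB × Fin dC × Fin dA,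
        ((Matrix.of fun p q : Fin dB × Fin dC × Fin dA =>
            ρB (p.1, p.2.2) (q.1, q.2.2) * (if p.2.1 = q.2.1 then (1 : ℂ) else 0)) *
         (Matrix.of fun p q : Fin dB × Fin dC × Fin dA =>
            ρC (p.2.1, p.2.2) (q.2.1, q.2.2) * (if p.1 = q.1 then (1 : ℂ) else 0))) p q
        = ∑ x : Fin dG, W ((p.1, p.2.1), x) p.2.2 * star (W ((q.1, q.2.1), x) q.2.2)) := by
  classical
  obtain ⟨dF1, U, hU1, hU2, hUρ⟩ := hB
  obtain ⟨dF2, V, hV1, hV2, hVρ⟩ := hC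
  rcases Nat.eq_zero_or_pos dA with hA0 | hApos
  · refine ⟨0, Matrix.of fun _ _ => 0, ?_, ?_, ?_⟩
    · intro u v; exact u.2.elim0
    · intro a a'; exact absurd a.isLt (by omega)
    · intro p q; exact absurd p.2.2.isLt (by omega)
  have a0 : Fin dA := ⟨0, hApos⟩
  have hdB : dB ≠ 0 := by
    intro h
    subst h
    simpa using hBtr a0 a0
  have hdC : dC ≠ 0 := by
    intro h
    subst h
    simpa using hCtr a0 a0
  have b0 : Fin dB := ⟨0, Nat.pos_of_ne_zero hdB⟩
  have c0 : Fin dC := ⟨0, Nat.pos_of_ne_zero hdC⟩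
  -- conjugated forms of the unitarity conditions
  have hU1' : ∀ u v, ∑ a, star (U u a) * U v a = if u = v then (1 : ℂ) else 0 := by
    intro u v
    have h := congrArg star (hU1 u v)
    simpa [star_sum, mul_comm, eq_comm] using h
  have hU2' : ∀ a a', ∑ u, U u a * star (U u a') = if a = a' then (1 : ℂ) else 0 := by
    intro a a'
    have h := congrArg star (hU2 a a')
    simpa [star_sum, mul_comm, eq_comm] using h
  have hV1' : ∀ u v, ∑ a, star (V u a) * V v a = if u = v then (1 : ℂ) else 0 := by
    intro u v
    have h := congrArg star (hV1 u v)
    simpa [star_sum, mul_comm, eq_comm] using h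
  -- entrywise commutation
  have hcomm' : ∀ b c a b' c' a',
      ∑ a'', ρB (b,a) (b',a'') * ρC (c,a'') (c',a')
        = ∑ a'', ρC (c,a) (c',a'') * ρB (b,a'') (b',a') := by
    intro b c a b' c' a'
    have h := (Matrix.ext_iff.mpr hcomm.eq) (b,(c,a)) (b',(c',a'))
    simp only [Matrix.mul_apply, Matrix.of_apply, Fintype.sum_prod_type] at h
    simpa [mul_ite, ite_mul, Finset.sum_ite_eq, Finset.sum_ite_eq',
      mul_comm, mul_left_comm] using h
  -- block matrices
  obtain ⟨Um, hUm⟩ : ∃ Um : Fin dB → Matrix (Fin dF1) (Fin dA) ℂ,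
      ∀ b x a, Um b x a = U (b,x) a := ⟨fun b => Matrix.of fun x a => U (b,x) a, fun _ _ _ => rfl⟩
  obtain ⟨Vm, hVm⟩ : ∃ Vm : Fin dC → Matrix (Fin dF2) (Fin dA) ℂ,
      ∀ c y a, Vm c y a = V (c,y) a := ⟨fun c => Matrix.of fun y a => V (c,y) a, fun _ _ _ => rfl⟩
  obtain ⟨Bm, hBm⟩ : ∃ Bm : Fin dB → Fin dB → Matrix (Fin dA) (Fin dA) ℂ,
      ∀ b b' a a', Bm b b' a a' = ρB (b,a) (b',a') :=
    ⟨fun b b' => Matrix.of fun a a' => ρB (b,a) (b',a'), fun _ _ _ _ => rfl⟩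
  obtain ⟨Cm, hCm⟩ : ∃ Cm : Fin dC → Fin dC → Matrix (Fin dA) (Fin dA) ℂ,
      ∀ c c' a a', Cm c c' a a' = ρC (c,a) (c',a') :=
    ⟨fun c c' => Matrix.of fun a a' => ρC (c,a) (c',a'), fun _ _ _ _ => rfl⟩
  have f1 : ∀ b b', Bm b b' = (Um b)ᵀ * (Um b').map star := by
    intro b b'
    ext a a'
    simp [Matrix.mul_apply, hUm, hBm, hUρ]
  have f2 : ∀ b b', (Um b).map star * (Um b')ᵀ
      = if b = b' then (1 : Matrix (Fin dF1) (Fin dF1) ℂ) else 0 := by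
    intro b b'
    ext x x'
    rw [Matrix.mul_apply]
    simp only [hUm, Matrix.map_apply, Matrix.transpose_apply]
    rw [hU1' (b,x) (b',x')]
    by_cases hb : b = b' <;> by_cases hx : x = x' <;>
      simp [hb, hx, Matrix.one_apply, Prod.ext_iff]
  have g1 : ∀ c c', Cm c c' = (Vm c)ᵀ * (Vm c').map star := by
    intro c c'
    ext a a'
    simp [Matrix.mul_apply, hVm, hCm, hVρ]
  have g2 : ∀ c c', (Vm c).map star * (Vm c')ᵀ
      = if c = c' then (1 : Matrix (Fin dF2) (Fin dF2) ℂ) else 0 := by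
    intro c c'
    ext y y'
    rw [Matrix.mul_apply]
    simp only [hVm, Matrix.map_apply, Matrix.transpose_apply]
    rw [hV1' (c,y) (c',y')]
    by_cases hc : c = c' <;> by_cases hy : y = y' <;>
      simp [hc, hy, Matrix.one_apply, Prod.ext_iff]
  have hCC : ∀ c c' c'' c''', Cm c c' * Cm c'' c'''
      = (if c' = c'' then (1:ℂ) else 0) • Cm c c''' := by
    intro c c' c'' c'''
    rw [g1, g1, g1, Matrix.mul_assoc, ← Matrix.mul_assoc ((Vm c').map star), g2]
    by_cases h : c' = c'' <;> simp [h, Matrix.mul_assoc]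
  have hcM : ∀ b b' c c', Bm b b' * Cm c c' = Cm c c' * Bm b b' := by
    intro b b' c c'
    ext a a'
    rw [Matrix.mul_apply, Matrix.mul_apply]
    simp only [hBm, hCm]
    exact hcomm' b c a b' c' a'
  -- conjugated blocks
  obtain ⟨Dm, hDm⟩ : ∃ Dm : Fin dC → Fin dC → Fin dB → Fin dB → Matrix (Fin dF1) (Fin dF1) ℂ,
      ∀ c c' b b', Dm c c' b b' = (Um b).map star * Cm c c' * (Um b')ᵀ :=
    ⟨fun c c' b b' => (Um b).map star * Cm c c' * (Um b')ᵀ, fun _ _ _ _ => rfl⟩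
  have hKmid : ∀ c c' b b' β β',
      ((Um β).map star * (Um b)ᵀ) * Dm c c' b' β'
        = Dm c c' β b * ((Um b').map star * (Um β')ᵀ) := by
    intro c c' b b' β β'
    have e1 : ((Um β).map star * (Um b)ᵀ) * Dm c c' b' β'
        = (Um β).map star * (Bm b b' * Cm c c') * (Um β')ᵀ := by
      rw [hDm, f1]
      simp only [Matrix.mul_assoc]
    have e2 : Dm c c' β b * ((Um b').map star * (Um β')ᵀ)
        = (Um β).map star * (Cm c c' * Bm b b') * (Um β')ᵀ := by
      rw [hDm, f1]
      simp only [Matrix.mul_assoc]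
    rw [e1, e2, hcM]
  have K : ∀ c c' b b' β β',
      (if β = b then (1:ℂ) else 0) • Dm c c' b' β'
        = (if b' = β' then (1:ℂ) else 0) • Dm c c' β b := by
    intro c c' b b' β β'
    have h := hKmid c c' b b' β β'
    rw [f2, f2] at h
    by_cases h1 : β = b <;> by_cases h2 : b' = β' <;>
      simp [h1, h2] at h ⊢ <;> simp [h]
  obtain ⟨T, hT⟩ : ∃ T : Fin dC → Fin dC → Matrix (Fin dF1) (Fin dF1) ℂ,
      ∀ c c', T c c' = Dm c c' b0 b0 := ⟨fun c c' => Dm c c' b0 b0, fun _ _ => rfl⟩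
  have hDb : ∀ c c' b b', Dm c c' b b' = if b = b' then T c c' else 0 := by
    intro c c' b b'
    by_cases h : b = b'
    · subst h
      have h2 := K c c' b b0 b b0
      simp at h2
      simp [hT, h2]
    · have h2 := K c c' b' b' b b'
      simp [h, Ne.symm h] at h2
      simp [h, ← h2]
  obtain ⟨Df, hDf⟩ : ∃ Df : Fin dC → Fin dC → Matrix (Fin dB × Fin dF1) (Fin dB × Fin dF1) ℂ,
      ∀ c c', Df c c' = U.map star * Cm c c' * Uᵀ :=
    ⟨fun c c' => U.map star * Cm c c' * Uᵀ, fun _ _ => rfl⟩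
  have hDfDm : ∀ c c' b x b' x', Df c c' (b,x) (b',x') = Dm c c' b b' x x' := by
    intro c c' b x b' x'
    rw [hDf, hDm]
    simp [Matrix.mul_apply, Matrix.map_apply, Matrix.transpose_apply, hUm]
  have hUtUs : Uᵀ * U.map star = 1 := by
    ext a a'
    rw [Matrix.mul_apply]
    simp only [Matrix.map_apply, Matrix.transpose_apply]
    rw [hU2' a a']
    simp [Matrix.one_apply]
  have hDfD : ∀ c c' c'' c''', Df c c' * Df c'' c'''
      = (if c' = c'' then (1:ℂ) else 0) • Df c c''' := by
    intro c c' c'' c'''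
    rw [hDf, hDf, hDf]
    simp only [Matrix.mul_assoc]
    rw [← Matrix.mul_assoc Uᵀ (U.map star) (Cm c'' c''' * Uᵀ), hUtUs, Matrix.one_mul,
      ← Matrix.mul_assoc (Cm c c') (Cm c'' c''') Uᵀ, hCC]
    by_cases h : c' = c'' <;> simp [h, Matrix.mul_assoc]
  have hDb' : ∀ c c' b b' x x', Dm c c' b b' x x' = if b = b' then T c c' x x' else 0 := by
    intro c c' b b' x x'
    rw [hDb]
    by_cases h : b = b' <;> simp [h]
  have t1 : ∀ c c' c'' c''', T c c' * T c'' c'''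
      = (if c' = c'' then (1:ℂ) else 0) • T c c''' := by
    intro c c' c'' c'''
    ext x x'
    have h := (Matrix.ext_iff.mpr (hDfD c c' c'' c''')) (b0,x) (b0,x')
    rw [Matrix.mul_apply] at h
    simp only [Fintype.sum_prod_type, hDfDm, hDb', Matrix.smul_apply, eq_self_iff_true, if_true] at h
    rw [Matrix.mul_apply]
    simp only [Matrix.smul_apply]
    rw [← h]
    rw [Finset.sum_comm]
    refine Finset.sum_congr rfl fun j _ => ?_
    rw [Finset.sum_eq_single b0]
    · simp
    · intro b _ hb
      simp [Ne.symm hb]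
    · simp
  -- T is a *-closed family
  have hTapp : ∀ c c' x x', T c c' x x'
      = ∑ a', (∑ a, star (U (b0,x) a) * ρC (c,a) (c',a')) * U (b0,x') a' := by
    intro c c' x x'
    rw [hT, hDm, Matrix.mul_apply]
    refine Finset.sum_congr rfl fun a' _ => ?_
    rw [Matrix.mul_apply]
    simp [hUm, hCm]
  have hCH : ∀ c a c' a', star (ρC (c,a) (c',a')) = ρC (c',a') (c,a) := by
    intro c a c' a'
    exact hCpsd.1.apply (c',a') (c,a)
  have t2 : ∀ c c' x x', star (T c c' x' x) = T c' c x x' := by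
    intro c c' x x'
    rw [hTapp c c' x' x, hTapp c' c x x', star_sum]
    have key : ∀ a', star ((∑ a, star (U (b0,x') a) * ρC (c,a) (c',a')) * U (b0,x) a')
        = ∑ a, U (b0,x') a * ρC (c',a') (c,a) * star (U (b0,x) a') := by
      intro a'
      rw [star_mul', star_sum, Finset.sum_mul]
      refine Finset.sum_congr rfl fun a _ => ?_
      rw [star_mul', star_star, hCH]
    simp only [key]
    rw [Finset.sum_comm]
    refine Finset.sum_congr rfl fun a _ => ?_
    rw [Finset.sum_mul]
    refine Finset.sum_congr rfl fun a' _ => ?_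
    ring
  have t2M : ∀ c c', (T c c')ᴴ = T c' c := by
    intro c c'
    ext x x'
    rw [Matrix.conjTranspose_apply]
    exact t2 c c' x x'
  have t3 : ∑ c, T c c = 1 := by
    have hsumC : ∑ c, Cm c c = 1 := by
      ext a a'
      rw [Matrix.sum_apply]
      simp only [hCm]
      rw [hCtr a a']
      simp [Matrix.one_apply]
    have : ∑ c, T c c = (Um b0).map star * (∑ c, Cm c c) * (Um b0)ᵀ := by
      rw [Matrix.mul_sum, Matrix.sum_mul]
      refine Finset.sum_congr rfl fun c _ => ?_
      rw [hT, hDm]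
    rw [this, hsumC, Matrix.mul_one, f2]
    simp
  -- spectral decomposition of the projection P = T c0 c0
  have hPidem : T c0 c0 * T c0 c0 = T c0 c0 := by
    have h := t1 c0 c0 c0 c0
    simpa using h
  have hPherm : (T c0 c0).IsHermitian := t2M c0 c0
  obtain ⟨Q, d, hQ1, hQ2, hspec⟩ : ∃ (Q : Matrix (Fin dF1) (Fin dF1) ℂ) (d : Fin dF1 → ℂ),
      Qᴴ * Q = 1 ∧ Q * Qᴴ = 1 ∧ T c0 c0 = Q * Matrix.diagonal d * Qᴴ := by
    refine ⟨hPherm.eigenvectorUnitary, fun i => (hPherm.eigenvalues i : ℂ), ?_, ?_, ?_⟩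
    · have := Matrix.mem_unitaryGroup_iff'.mp hPherm.eigenvectorUnitary.2
      simpa [Matrix.star_eq_conjTranspose] using this
    · have := Matrix.mem_unitaryGroup_iff.mp hPherm.eigenvectorUnitary.2
      simpa [Matrix.star_eq_conjTranspose] using this
    · have := hPherm.spectral_theorem
      simpa [Matrix.star_eq_conjTranspose, Function.comp_def] using this
  have hdiag : Matrix.diagonal d * Matrix.diagonal d = Matrix.diagonal d := by
    have h1 : Qᴴ * T c0 c0 * Q = Matrix.diagonal d := by
      rw [hspec, Matrix.mul_assoc, Matrix.mul_assoc, hQ1, Matrix.mul_one, ← Matrix.mul_assoc,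
        hQ1, Matrix.one_mul]
    calc Matrix.diagonal d * Matrix.diagonal d
        = (Qᴴ * T c0 c0 * Q) * (Qᴴ * T c0 c0 * Q) := by rw [h1]
      _ = Qᴴ * (T c0 c0 * (Q * Qᴴ) * T c0 c0) * Q := by
          simp only [Matrix.mul_assoc]
      _ = Qᴴ * T c0 c0 * Q := by rw [hQ2, Matrix.mul_one, hPidem, Matrix.mul_assoc]
      _ = Matrix.diagonal d := h1
  have hd01 : ∀ i, d i = 0 ∨ d i = 1 := by
    intro i
    have h := (Matrix.ext_iff.mpr hdiag) i i
    rw [Matrix.diagonal_mul_diagonal] at h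
    simp only [Matrix.diagonal_apply_eq] at h
    have h2 : d i * (d i - 1) = 0 := by ring_nf; linear_combination h
    rcases mul_eq_zero.mp h2 with h3 | h3
    · exact Or.inl h3
    · exact Or.inr (by linear_combination h3)
  -- the ancilla dimension
  set sG : Finset (Fin dF1) := Finset.univ.filter (fun i => d i = 1) with hsG
  obtain ⟨e, he_inj, he_mem, he_sum⟩ : ∃ e : Fin sG.card → Fin dF1,
      Function.Injective e ∧ (∀ g, d (e g) = 1) ∧
      (∀ f : Fin dF1 → ℂ, ∑ g, f (e g) = ∑ i ∈ sG, f i) := by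
    refine ⟨fun g => ((sG.orderIsoOfFin rfl g : sG) : Fin dF1), ?_, ?_, ?_⟩
    · intro g g' h
      exact (sG.orderIsoOfFin rfl).injective (Subtype.ext h)
    · intro g
      obtain ⟨i, hi⟩ : ∃ i : Fin dF1, ((sG.orderIsoOfFin rfl g : sG) : Fin dF1) = i := ⟨_, rfl⟩
      have h5 := (sG.orderIsoOfFin rfl g).2
      rw [hi] at h5
      have h6 : d i = 1 := by
        rw [hsG, Finset.mem_filter] at h5
        exact h5.2
      simpa [hi] using h6
    · intro f
      rw [← Finset.sum_coe_sort sG f]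
      exact Fintype.sum_equiv (sG.orderIsoOfFin rfl).toEquiv _ _ (fun g => rfl)
  obtain ⟨N, hN⟩ : ∃ N : Matrix (Fin dF1) (Fin sG.card) ℂ,
      ∀ x g, N x g = Q x (e g) := ⟨Matrix.of fun x g => Q x (e g), fun _ _ => rfl⟩
  have hN1 : Nᴴ * N = 1 := by
    ext g g'
    rw [Matrix.mul_apply]
    simp only [Matrix.conjTranspose_apply, hN]
    have h := (Matrix.ext_iff.mpr hQ1) (e g) (e g')
    rw [Matrix.mul_apply] at h
    simp only [Matrix.conjTranspose_apply] at h
    rw [h]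
    simp [Matrix.one_apply, he_inj.eq_iff]
  have hN2 : N * Nᴴ = T c0 c0 := by
    ext x x'
    rw [Matrix.mul_apply]
    simp only [Matrix.conjTranspose_apply, hN]
    rw [he_sum (fun i => Q x i * star (Q x' i))]
    rw [hspec, Matrix.mul_apply]
    have hQD : ∀ j, (Q * Matrix.diagonal d) x j = Q x j * d j := fun j => Matrix.mul_diagonal _ _ _ _
    simp only [hQD, Matrix.conjTranspose_apply]
    rw [Finset.sum_filter]
    refine Finset.sum_congr rfl fun i _ => ?_
    rcases hd01 i with h | h <;> simp [h]
  have htrP : Matrix.trace (T c0 c0) = (sG.card : ℂ) := by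
    rw [← hN2, Matrix.trace_mul_comm, hN1, Matrix.trace_one]
    simp
  have hcard : dF1 = dC * sG.card := by
    have h1 : (dF1 : ℂ) = (dC : ℂ) * (sG.card : ℂ) := by
      have htc : ∀ c, Matrix.trace (T c c) = (sG.card : ℂ) := by
        intro c
        have h3 : T c c = T c c0 * T c0 c := by
          have := t1 c c0 c0 c
          simpa using this.symm
        rw [h3, Matrix.trace_mul_comm]
        have h4 : T c0 c * T c c0 = T c0 c0 := by
          have := t1 c0 c c c0
          simpa using this
        rw [h4, htrP]
      have h2 : Matrix.trace (∑ c, T c c) = (dC : ℂ) * (sG.card : ℂ) := by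
        rw [Matrix.trace_sum]
        simp [htc, Finset.sum_const, Finset.card_univ, mul_comm]
      rw [t3, Matrix.trace_one] at h2
      simpa using h2
    exact_mod_cast h1
  -- the unitary R : F1 -> C x G diagonalizing the T's
  obtain ⟨R, hR⟩ : ∃ R : Matrix (Fin dC × Fin sG.card) (Fin dF1) ℂ,
      ∀ c g x, R (c,g) x = star ((T c c0 * N) x g) :=
    ⟨Matrix.of fun cg x => star ((T cg.1 c0 * N) x cg.2), fun _ _ _ => rfl⟩
  have hTcP : ∀ c c', T c c0 * T c0 c' = T c c' := by
    intro c c'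
    have := t1 c c0 c0 c'
    simpa using this
  have hRRh : R * Rᴴ = 1 := by
    ext ⟨c,g⟩ ⟨c',g'⟩
    rw [Matrix.mul_apply]
    simp only [Matrix.conjTranspose_apply, hR, star_star]
    have key : ∑ x, star ((T c c0 * N) x g) * ((T c' c0 * N) x g')
        = ((T c c0 * N)ᴴ * (T c' c0 * N)) g g' := by
      rw [Matrix.mul_apply]
      simp [Matrix.conjTranspose_apply]
    rw [key]
    have hmat : (T c c0 * N)ᴴ * (T c' c0 * N)
        = (if c = c' then (1:ℂ) else 0) • (1 : Matrix (Fin sG.card) (Fin sG.card) ℂ) := by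
      rw [Matrix.conjTranspose_mul, t2M]
      calc Nᴴ * T c0 c * (T c' c0 * N)
          = Nᴴ * ((T c0 c * T c' c0) * N) := by simp only [Matrix.mul_assoc]
        _ = Nᴴ * (((if c = c' then (1:ℂ) else 0) • T c0 c0) * N) := by rw [t1]
        _ = (if c = c' then (1:ℂ) else 0) • (Nᴴ * (T c0 c0 * N)) := by
            by_cases h : c = c' <;> simp [h, Matrix.mul_assoc]
        _ = (if c = c' then (1:ℂ) else 0) • (1 : Matrix (Fin sG.card) (Fin sG.card) ℂ) := by
            rw [← hN2]
            simp only [Matrix.mul_assoc]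
            rw [hN1, Matrix.mul_one, hN1]
    rw [hmat]
    by_cases h1 : c = c' <;> by_cases h2 : g = g' <;>
      simp [h1, h2, Matrix.one_apply, Prod.ext_iff]
  have hRc : Rᴴ * R = 1 := by
    have hcards : Fintype.card (Fin dF1) = Fintype.card (Fin dC × Fin sG.card) := by
      simp [hcard]
    obtain ⟨σ⟩ : Nonempty (Fin dF1 ≃ Fin dC × Fin sG.card) :=
      ⟨Fintype.equivOfCardEq hcards⟩
    have h1 : (R.submatrix σ id) * ((R.submatrix σ id)ᴴ) = 1 := by
      rw [Matrix.conjTranspose_submatrix]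
      have h2 : R.submatrix (⇑σ) (⇑(Equiv.refl (Fin dF1))) * Rᴴ.submatrix (⇑(Equiv.refl (Fin dF1))) (⇑σ)
          = (R * Rᴴ).submatrix (⇑σ) (⇑σ) := Matrix.submatrix_mul_equiv R Rᴴ (⇑σ) (Equiv.refl _) (⇑σ)
      simpa [hRRh, Matrix.submatrix_one_equiv] using h2
    have h3 := mul_eq_one_comm.mp h1
    ext x x'
    have h4 := (Matrix.ext_iff.mpr h3) x x'
    rw [Matrix.mul_apply] at h4 ⊢
    simp only [Matrix.conjTranspose_apply, Matrix.submatrix_apply, id_eq] at h4 ⊢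
    rw [← Equiv.sum_comp σ (fun cg => star (R cg x) * R cg x')]
    exact h4
  have hTR : ∀ c c' x x', ∑ g, star (R (c,g) x) * R (c',g) x' = T c c' x x' := by
    intro c c' x x'
    simp only [hR, star_star]
    have key : ∑ g, (T c c0 * N) x g * star ((T c' c0 * N) x' g)
        = ((T c c0 * N) * (T c' c0 * N)ᴴ) x x' := by
      rw [Matrix.mul_apply]
      simp [Matrix.conjTranspose_apply]
    rw [key, Matrix.conjTranspose_mul, t2M]
    have : (T c c0 * N) * (Nᴴ * T c0 c') = T c c0 * (N * Nᴴ) * T c0 c' := by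
      simp only [Matrix.mul_assoc]
    rw [this, hN2, hTcP, hTcP]
  -- derived unitarity facts for R
  have hRR2 : ∀ cg cg' : Fin dC × Fin sG.card,
      ∑ x, star (R cg x) * R cg' x = if cg = cg' then (1:ℂ) else 0 := by
    intro cg cg'
    have h := (Matrix.ext_iff.mpr hRRh) cg cg'
    rw [Matrix.mul_apply] at h
    simp only [Matrix.conjTranspose_apply] at h
    have h2 := congrArg star h
    simpa [star_sum, mul_comm, Matrix.one_apply] using h2
  have hRz' : ∀ x x', ∑ c, ∑ g, R (c,g) x * star (R (c,g) x')
      = if x = x' then (1:ℂ) else 0 := by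
    intro x x'
    have h := (Matrix.ext_iff.mpr hRc) x x'
    rw [Matrix.mul_apply] at h
    simp only [Matrix.conjTranspose_apply] at h
    have h2 := congrArg star h
    simp only [star_sum, star_mul', star_star] at h2
    rw [Fintype.sum_prod_type] at h2
    simpa [mul_comm, Matrix.one_apply] using h2
  -- the row identity
  obtain ⟨Pim, hPim⟩ : ∃ Pim : Fin dB → Matrix (Fin dF1) (Fin dB × Fin dF1) ℂ,
      ∀ b x u, Pim b x u = if u = (b,x) then 1 else 0 :=
    ⟨fun b => Matrix.of fun x u => if u = (b,x) then 1 else 0, fun _ _ _ => rfl⟩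
  have hPiU : ∀ b, Pim b * U.map star = (Um b).map star := by
    intro b
    ext x a
    rw [Matrix.mul_apply]
    simp [hPim, hUm, Finset.sum_ite_eq, ite_mul, one_mul, zero_mul]
  have hPiD : ∀ b c c', Pim b * Df c c' = T c c' * Pim b := by
    intro b c c'
    ext x u
    obtain ⟨β, x'⟩ := u
    rw [Matrix.mul_apply, Matrix.mul_apply]
    have hl : ∑ u : Fin dB × Fin dF1, Pim b x u * Df c c' u (β,x')
        = Df c c' (b,x) (β,x') := by
      simp [hPim, ite_mul, one_mul, zero_mul, Finset.sum_ite_eq]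
    rw [hl, hDfDm, hDb']
    simp only [hPim]
    by_cases hb : β = b
    · subst hb
      simp [Prod.ext_iff, mul_ite, mul_one, mul_zero, Finset.sum_ite_eq']
    · simp [hb, Ne.symm hb, Prod.ext_iff, mul_ite, mul_one, mul_zero]
  have hUC : ∀ c c', Df c c' * U.map star = U.map star * Cm c c' := by
    intro c c'
    rw [hDf, Matrix.mul_assoc, hUtUs, Matrix.mul_one]
  have hrow : ∀ b c c', (Um b).map star * Cm c c' = T c c' * (Um b).map star := by
    intro b c c'
    rw [← hPiU b, Matrix.mul_assoc, ← hUC, ← Matrix.mul_assoc, hPiD, Matrix.mul_assoc]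
  have hBC : ∀ b b' c c', Bm b b' * Cm c c' = (Um b)ᵀ * (T c c' * (Um b').map star) := by
    intro b b' c c'
    rw [f1, Matrix.mul_assoc, hrow]
  -- the final unitary W
  obtain ⟨W, hW⟩ : ∃ W : Matrix ((Fin dB × Fin dC) × Fin sG.card) (Fin dA) ℂ,
      ∀ b c g a, W ((b,c),g) a = ∑ x, star (R (c,g) x) * U (b,x) a :=
    ⟨Matrix.of fun u a => ∑ x, star (R (u.1.2, u.2) x) * U (u.1.1, x) a, fun _ _ _ _ => rfl⟩
  obtain ⟨X, hX⟩ : ∃ X : Matrix ((Fin dB × Fin dC) × Fin sG.card) (Fin dB × Fin dF1) ℂ,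
      ∀ b c g β x, X ((b,c),g) (β,x) = if β = b then star (R (c,g) x) else 0 :=
    ⟨Matrix.of fun u v => if v.1 = u.1.1 then star (R (u.1.2, u.2) v.2) else 0,
      fun _ _ _ _ _ => rfl⟩
  have hWX : W = X * U := by
    ext ⟨⟨b,c⟩,g⟩ a
    rw [Matrix.mul_apply, hW]
    rw [Fintype.sum_prod_type]
    rw [Finset.sum_eq_single b]
    · refine Finset.sum_congr rfl fun x _ => ?_
      rw [hX]
      simp
    · intro β _ hβ
      simp [hX, hβ]
    · simp
  have hXXh : X * Xᴴ = 1 := by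
    ext ⟨⟨b,c⟩,g⟩ ⟨⟨b',c'⟩,g'⟩
    rw [Matrix.mul_apply, Fintype.sum_prod_type]
    simp only [Matrix.conjTranspose_apply]
    have hterm : ∀ β, ∑ x, X ((b,c),g) (β,x) * star (X ((b',c'),g') (β,x))
        = (if β = b then (1:ℂ) else 0) * (if β = b' then (1:ℂ) else 0)
            * ∑ x, star (R (c,g) x) * R (c',g') x := by
      intro β
      simp only [hX]
      by_cases h1 : β = b
      · subst h1
        by_cases h2 : β = b' <;> simp [h2, Finset.mul_sum]
      · simp [h1]
    simp only [hterm]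
    rw [hRR2 (c,g) (c',g')]
    rw [Finset.sum_eq_single b]
    · rw [if_pos rfl, one_mul, Matrix.one_apply]
      by_cases h1 : b = b' <;> by_cases h2 : c = c' <;> by_cases h3 : g = g' <;>
        simp [h1, h2, h3, Prod.ext_iff]
    · intro β _ hβ
      simp [hβ]
    · simp
  have hXX : Xᴴ * X = 1 := by
    ext ⟨b,x⟩ ⟨b',x'⟩
    rw [Matrix.mul_apply, Fintype.sum_prod_type, Fintype.sum_prod_type]
    simp only [Matrix.conjTranspose_apply]
    have hterm : ∀ β c, ∑ g, star (X ((β,c),g) (b,x)) * X ((β,c),g) (b',x')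
        = (if b = β then (1:ℂ) else 0) * (if b' = β then (1:ℂ) else 0)
            * ∑ g, R (c,g) x * star (R (c,g) x') := by
      intro β c
      simp only [hX]
      by_cases h1 : b = β
      · subst h1
        by_cases h2 : b' = b <;> simp [h2, Finset.mul_sum]
      · simp [h1]
    simp only [hterm]
    by_cases h1 : b = b'
    · subst h1
      have : ∀ c, ∑ β, (if b = β then (1:ℂ) else 0) * (if b = β then (1:ℂ) else 0)
          * ∑ g, R (c,g) x * star (R (c,g) x')
          = ∑ g, R (c,g) x * star (R (c,g) x') := by
        intro c
        rw [Finset.sum_eq_single b]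
        · simp
        · intro β _ hβ
          simp [Ne.symm hβ]
        · simp
      rw [Finset.sum_comm]
      simp only [this]
      rw [hRz' x x']
      simp [Matrix.one_apply, Prod.ext_iff]
    · have : ∀ c β, (if b = β then (1:ℂ) else 0) * (if b' = β then (1:ℂ) else 0)
          * ∑ g, R (c,g) x * star (R (c,g) x') = 0 := by
        intro c β
        by_cases hb : b = β
        · by_cases hb' : b' = β
          · exact absurd (hb.trans hb'.symm) h1
          · simp [hb']
        · simp [hb]
      simp only [this, Finset.sum_const_zero, Matrix.one_apply]
      simp [Prod.ext_iff, h1]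
  have hU1M : U * Uᴴ = 1 := by
    ext u v
    rw [Matrix.mul_apply]
    simp only [Matrix.conjTranspose_apply]
    rw [hU1 u v]
    simp [Matrix.one_apply]
  have hU2M : Uᴴ * U = 1 := by
    ext a a'
    rw [Matrix.mul_apply]
    simp only [Matrix.conjTranspose_apply]
    rw [hU2 a a']
    simp [Matrix.one_apply]
  have hWWh : W * Wᴴ = 1 := by
    rw [hWX, Matrix.conjTranspose_mul, Matrix.mul_assoc, ← Matrix.mul_assoc U, hU1M,
      Matrix.one_mul, hXXh]
  have hWhW : Wᴴ * W = 1 := by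
    rw [hWX, Matrix.conjTranspose_mul, Matrix.mul_assoc, ← Matrix.mul_assoc Xᴴ, hXX,
      Matrix.one_mul, hU2M]
  refine ⟨sG.card, W, ?_, ?_, ?_⟩
  · intro u v
    have h := (Matrix.ext_iff.mpr hWWh) u v
    rw [Matrix.mul_apply] at h
    simp only [Matrix.conjTranspose_apply] at h
    rw [h]
    simp [Matrix.one_apply]
  · intro a a'
    have h := (Matrix.ext_iff.mpr hWhW) a a'
    rw [Matrix.mul_apply] at h
    simp only [Matrix.conjTranspose_apply] at h
    rw [h]
    simp [Matrix.one_apply]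
  · rintro ⟨b, c, a⟩ ⟨b', c', a'⟩
    have hL : (((Matrix.of fun p q : Fin dB × Fin dC × Fin dA =>
            ρB (p.1, p.2.2) (q.1, q.2.2) * (if p.2.1 = q.2.1 then (1 : ℂ) else 0)) *
         (Matrix.of fun p q : Fin dB × Fin dC × Fin dA =>
            ρC (p.2.1, p.2.2) (q.2.1, q.2.2) * (if p.1 = q.1 then (1 : ℂ) else 0)))
            (b,(c,a)) (b',(c',a')))
        = ∑ a'', ρB (b,a) (b',a'') * ρC (c,a'') (c',a') := by
      rw [Matrix.mul_apply]
      simp only [Matrix.of_apply, Fintype.sum_prod_type]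
      simp [mul_ite, ite_mul, mul_zero, zero_mul, mul_one, one_mul,
        Finset.sum_ite_eq, Finset.sum_ite_eq']
    have hL2 : ∑ a'', ρB (b,a) (b',a'') * ρC (c,a'') (c',a') = (Bm b b' * Cm c c') a a' := by
      rw [Matrix.mul_apply]
      simp [hBm, hCm]
    have hLHS : ((Um b)ᵀ * (T c c' * (Um b').map star)) a a'
        = ∑ x, U (b,x) a * (∑ x', T c c' x x' * star (U (b',x') a')) := by
      rw [Matrix.mul_apply]
      refine Finset.sum_congr rfl fun x _ => ?_
      rw [Matrix.transpose_apply, hUm, Matrix.mul_apply]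
      simp [hUm, Matrix.map_apply]
    have hRHS : ∑ g, W ((b,c),g) a * star (W ((b',c'),g) a')
        = ∑ x, U (b,x) a * (∑ x', T c c' x x' * star (U (b',x') a')) := by
      have hstar : ∀ g, star (W ((b',c'),g) a') = ∑ x', R (c',g) x' * star (U (b',x') a') := by
        intro g
        rw [hW, star_sum]
        refine Finset.sum_congr rfl fun x' _ => ?_
        rw [star_mul', star_star]
      calc ∑ g, W ((b,c),g) a * star (W ((b',c'),g) a')
          = ∑ g, ∑ x, ∑ x', (star (R (c,g) x) * R (c',g) x')
              * (U (b,x) a * star (U (b',x') a')) := by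
            refine Finset.sum_congr rfl fun g _ => ?_
            rw [hW, hstar, Finset.sum_mul_sum]
            exact Finset.sum_congr rfl fun x _ =>
              Finset.sum_congr rfl fun x' _ => by ring
        _ = ∑ x, ∑ x', (∑ g, star (R (c,g) x) * R (c',g) x')
              * (U (b,x) a * star (U (b',x') a')) := by
            rw [Finset.sum_comm]
            refine Finset.sum_congr rfl fun x _ => ?_
            rw [Finset.sum_comm]
            refine Finset.sum_congr rfl fun x' _ => ?_
            rw [Finset.sum_mul]
        _ = ∑ x, ∑ x', T c c' x x' * (U (b,x) a * star (U (b',x') a')) := by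
            simp only [hTR]
        _ = ∑ x, U (b,x) a * (∑ x', T c c' x x' * star (U (b',x') a')) := by
            refine Finset.sum_congr rfl fun x _ => ?_
            rw [Finset.mul_sum]
            refine Finset.sum_congr rfl fun x' _ => ?_
            ring
    calc _ = (Bm b b' * Cm c c') a a' := by rw [← hL2, ← hL]
      _ = _ := by rw [hBC, hLHS, hRHS]
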